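/- Let α = 0, let β ∈ (−π, π] with β ∉ {0, π}, let M be an n×n non-diagonal Hermitian unitary modularly permutation-symmetric complex matrix with |M_{jj}| = r, |M_{jℓ}| = t > 0 (j ≠ ℓ), d = r/t, and let U = exp(i(α+β)/2)·( cos((α−β)/2)·I + i·sin((α−β)/2)·M ). Then for every real k > 0 and all indices j ≠ ℓ, the ratio ρ(k) = |S(k)_{jj}|² / |S(k)_{jℓ}|² satisfies ρ(k) = d² + (d² + n − 1)·cot²(β/2)·k² (generalized δ'-coupling). -/

import Mathlib

open Matrix Real

set_option maxHeartbeats 1000000 in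
theorem stmt_17 (n : ℕ) (α β : ℝ)
    (hα : α = 0) (hβ : β ∈ Set.Ioc (-π) π) (hβ0 : β ≠ 0) (hβπ : β ≠ π)
    (M : Matrix (Fin n) (Fin n) ℂ)
    (hM : M.IsHermitian) (hMu : M ∈ Matrix.unitaryGroup (Fin n) ℂ)
    (hnd : ¬ M.IsDiag)
    (r t : ℝ) (ht0 : 0 < t)
    (hr : ∀ j, ‖M j j‖ = r)
    (ht : ∀ j l, j ≠ l → ‖M j l‖ = t)
    (d : ℝ) (hd : d = r / t)
    (U : Matrix (Fin n) (Fin n) ℂ)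
    (hU : U = Complex.exp (Complex.I * ((α + β) / 2)) •
        ((Real.cos ((α - β) / 2) : ℂ) • (1 : Matrix (Fin n) (Fin n) ℂ) +
          (Complex.I * (Real.sin ((α - β) / 2) : ℂ)) • M)) :
    ∀ k : ℝ, 0 < k → ∀ j l : Fin n, j ≠ l →
      ‖(((((k : ℂ) - 1) • U + ((k : ℂ) + 1) • (1 : Matrix (Fin n) (Fin n) ℂ))⁻¹ *
            (((k : ℂ) + 1) • U + ((k : ℂ) - 1) • (1 : Matrix (Fin n) (Fin n) ℂ))) j j)‖ ^ 2 /
          ‖(((((k : ℂ) - 1) • U + ((k : ℂ) + 1) • (1 : Matrix (Fin n) (Fin n) ℂ))⁻¹ *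
            (((k : ℂ) + 1) • U + ((k : ℂ) - 1) • (1 : Matrix (Fin n) (Fin n) ℂ))) j l)‖ ^ 2 =
        d ^ 2 + (d ^ 2 + n - 1) * Real.cot (β / 2) ^ 2 * k ^ 2 := by
  subst hα hd
  intro k hk j l hjl
  set s : ℝ := β / 2 with hs
  set w : ℂ := Complex.exp (Complex.I * (s:ℂ)) with hw
  set z : ℂ := w * w with hz
  have hwne : w ≠ 0 := hw ▸ Complex.exp_ne_zero _
  -- basic trig identities
  have hcos : (Real.cos s : ℂ) * w = (1 + z)/2 := by
    rw [Complex.ofReal_cos, Complex.cos, hz, hw]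
    rw [show -(s:ℂ) * Complex.I = -(Complex.I * s) by ring, Complex.exp_neg,
        show (s:ℂ) * Complex.I = Complex.I * s by ring]
    have : Complex.exp (Complex.I * s) ≠ 0 := Complex.exp_ne_zero _
    field_simp
    ring
  have hsinq : Complex.I * (Real.sin s : ℂ) * w = (z - 1)/2 := by
    rw [Complex.ofReal_sin, Complex.sin, hz, hw]
    rw [show -(s:ℂ) * Complex.I = -(Complex.I * s) by ring, Complex.exp_neg,
        show (s:ℂ) * Complex.I = Complex.I * s by ring]
    have : Complex.exp (Complex.I * s) ≠ 0 := Complex.exp_ne_zero _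
    field_simp
    linear_combination (1 - Complex.exp (Complex.I * s)^2) * Complex.I_sq
  have hsins : Real.sin s ≠ 0 := by
    have h1 : -π < s := by
      have := hβ.1; have := Real.pi_pos; rw [hs]; linarith
    have h2 : s < π := by
      have := hβ.2; have := Real.pi_pos; rw [hs]; linarith
    intro h
    rw [Real.sin_eq_zero_iff_of_lt_of_lt h1 h2] at h
    exact hβ0 (by rw [hs] at h; linarith)
  have hsinsne : ((Real.sin s : ℝ) : ℂ) ≠ 0 := by exact_mod_cast hsins
  have hz1 : (1:ℂ) - z ≠ 0 := by
    intro h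
    have h1 : Complex.I * (Real.sin s : ℂ) * w = 0 := by
      rw [hsinq]
      rw [show z - 1 = -(1 - z) by ring, h]
      simp
    rcases mul_eq_zero.mp h1 with h2 | h2
    · rcases mul_eq_zero.mp h2 with h3 | h3
      · exact Complex.I_ne_zero h3
      · exact hsinsne h3
    · exact hwne h2
  -- M is a square root of 1
  have hM2 : M * M = 1 := by
    have h1 : star M * M = 1 := hMu.1
    rwa [Matrix.star_eq_conjTranspose, hM.eq] at h1
  -- sums of squares on a row
  have hn1 : 1 ≤ n := Fin.pos j
  have hsum : r^2 + ((n:ℝ) - 1) * t^2 = 1 := by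
    have h1 : (M * M) j j = 1 := by rw [hM2]; simp
    rw [Matrix.mul_apply] at h1
    have h2 : ∀ x, M x j = starRingEnd ℂ (M j x) := by
      intro x
      have h := congrFun (congrFun hM.eq j) x
      rw [Matrix.conjTranspose_apply] at h
      rw [← h]
      simp
    have h3 : ∑ x, ((‖M j x‖)^2 : ℂ) = 1 := by
      rw [← h1]
      refine Finset.sum_congr rfl fun x _ => ?_
      rw [h2 x, Complex.mul_conj, ← Complex.sq_norm]
      push_cast
      ring
    have h4 : ∑ x, (‖M j x‖)^2 = 1 := by exact_mod_cast h3
    rw [← Finset.add_sum_erase _ _ (Finset.mem_univ j), hr j] at h4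
    rw [Finset.sum_congr rfl (fun x hx => by
      rw [ht j x (Ne.symm (Finset.ne_of_mem_erase hx))])] at h4
    rw [Finset.sum_const, Finset.card_erase_of_mem (Finset.mem_univ j),
      Finset.card_univ, Fintype.card_fin, nsmul_eq_mul, Nat.cast_sub hn1] at h4
    push_cast at h4 ⊢
    linarith
  -- rewrite U
  have hU' : U = ((1+z)/2) • (1 : Matrix (Fin n) (Fin n) ℂ) + ((1-z)/2) • M := by
    rw [hU]
    have e1 : Complex.I * ((((0:ℝ):ℂ) + (β:ℝ)) / 2) = Complex.I * (s:ℂ) := by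
      rw [hs]; push_cast; ring
    have e2 : ((0:ℝ) - β)/2 = -s := by rw [hs]; ring
    rw [e1, e2, Real.cos_neg, Real.sin_neg, ← hw]
    rw [smul_add, smul_smul, smul_smul]
    congr 1
    · congr 1
      linear_combination hcos
    · congr 1
      rw [Complex.ofReal_neg]
      linear_combination -hsinq
  -- Expansion of products of the form x•1 + y•M
  have key : ∀ (x y u v : ℂ), (x • (1:Matrix (Fin n) (Fin n) ℂ) + y • M) * (u • 1 + v • M)
      = (x*u + y*v) • (1:Matrix (Fin n) (Fin n) ℂ) + (x*v + y*u) • M := by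
    intro x y u v
    simp only [Matrix.add_mul, Matrix.mul_add, Matrix.smul_mul, Matrix.mul_smul,
      Matrix.one_mul, Matrix.mul_one, hM2]
    module
  set K : ℂ := (k : ℂ) with hK
  have hKpos : K ≠ 0 := by
    rw [hK]; exact_mod_cast ne_of_gt hk
  set D : ℂ := (K+1) + (K-1)*z with hD
  have hDne : D ≠ 0 := by
    intro h
    have habsz : ‖z‖ = 1 := by
      rw [hz, hw, norm_mul, Complex.norm_exp]
      simp
    have h1 : (K+1) = -((K-1)*z) := by linear_combination h
    have h2 : ‖K+1‖ = ‖K-1‖ * 1 := by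
      rw [h1, norm_neg, norm_mul, habsz]
    have h3 : ‖K+1‖ = |k+1| := by
      rw [hK, show ((k:ℂ)+1) = (((k+1:ℝ)):ℂ) by push_cast; ring, Complex.norm_real, Real.norm_eq_abs]
    have h4 : ‖K-1‖ = |k-1| := by
      rw [hK, show ((k:ℂ)-1) = (((k-1:ℝ)):ℂ) by push_cast; ring, Complex.norm_real, Real.norm_eq_abs]
    rw [h3, h4, mul_one] at h2
    rcases abs_cases (k-1) with ⟨h5, _⟩ | ⟨h5, _⟩ <;> rcases abs_cases (k+1) with ⟨h6, _⟩ | ⟨h6, _⟩ <;>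
      linarith
  set a : ℂ := (K-1)*((1+z)/2) + (K+1) with ha
  set b : ℂ := (K-1)*((1-z)/2) with hb
  set a' : ℂ := (K+1)*((1+z)/2) + (K-1) with ha'
  set b' : ℂ := (K+1)*((1-z)/2) with hb'
  set g : ℂ := 2*K*D with hg
  have hgne : g ≠ 0 := by
    rw [hg]
    exact mul_ne_zero (mul_ne_zero two_ne_zero hKpos) hDne
  have hA : (K - 1) • U + (K + 1) • (1 : Matrix (Fin n) (Fin n) ℂ)
      = a • (1 : Matrix (Fin n) (Fin n) ℂ) + b • M := by
    rw [hU', ha, hb]; module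
  have hB : (K + 1) • U + (K - 1) • (1 : Matrix (Fin n) (Fin n) ℂ)
      = a' • (1 : Matrix (Fin n) (Fin n) ℂ) + b' • M := by
    rw [hU', ha', hb']; module
  have hAinv : ((K - 1) • U + (K + 1) • (1 : Matrix (Fin n) (Fin n) ℂ))⁻¹
      = (a/g) • (1 : Matrix (Fin n) (Fin n) ℂ) + (-(b/g)) • M := by
    apply Matrix.inv_eq_right_inv
    rw [hA, key]
    have c1 : a*(a/g) + b*(-(b/g)) = 1 := by
      rw [ha, hb, hg]
      field_simp
      rw [hD]
      ring
    have c2 : a*(-(b/g)) + b*(a/g) = 0 := by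
      field_simp
      ring
    rw [c1, c2]
    simp
  set c : ℂ := K*(1+z)/D with hc
  set e : ℂ := (1-z)/D with he
  have hene : e ≠ 0 := by
    rw [he]
    exact div_ne_zero hz1 hDne
  have hS : (((K - 1) • U + (K + 1) • (1 : Matrix (Fin n) (Fin n) ℂ))⁻¹ *
      ((K + 1) • U + (K - 1) • (1 : Matrix (Fin n) (Fin n) ℂ)))
      = c • (1 : Matrix (Fin n) (Fin n) ℂ) + e • M := by
    rw [hAinv, hB, key]
    have c1 : (a/g)*a' + (-(b/g))*b' = c := by
      rw [ha, hb, ha', hb', hg, hc, hD]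
      field_simp
      ring
    have c2 : (a/g)*b' + (-(b/g))*a' = e := by
      rw [ha, hb, ha', hb', hg, he, hD]
      field_simp
      ring
    rw [c1, c2]
  -- entries
  have hSjj : (((K - 1) • U + (K + 1) • (1 : Matrix (Fin n) (Fin n) ℂ))⁻¹ *
      ((K + 1) • U + (K - 1) • (1 : Matrix (Fin n) (Fin n) ℂ))) j j = c + e * M j j := by
    rw [hS]
    simp [Matrix.add_apply, Matrix.smul_apply, Matrix.one_apply_eq, smul_eq_mul]
  have hSjl : (((K - 1) • U + (K + 1) • (1 : Matrix (Fin n) (Fin n) ℂ))⁻¹ *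
      ((K + 1) • U + (K - 1) • (1 : Matrix (Fin n) (Fin n) ℂ))) j l = e * M j l := by
    rw [hS]
    simp [Matrix.add_apply, Matrix.smul_apply, Matrix.one_apply_ne hjl, smul_eq_mul]
  -- relation between c and e via cot
  have hcot : c = e * (K * (Real.cot s : ℂ) * Complex.I) := by
    have hkeyid : (Real.sin s : ℂ) * (1+z) = Complex.I * (Real.cos s : ℂ) * (1-z) := by
      have hsw : (Real.sin s : ℂ) * w = Complex.I * (1 - z) / 2 := by
        linear_combination -Complex.I * hsinq + ((Real.sin s : ℂ) * w) * Complex.I_sq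
      have h1 : (Real.sin s : ℂ) * (1+z) * w = (Complex.I * (Real.cos s : ℂ) * (1-z)) * w := by
        linear_combination (1+z) * hsw - Complex.I * (1-z) * hcos
      exact mul_right_cancel₀ hwne h1
    have hkeyid' : Complex.sin (s:ℂ) * (1+z) = Complex.I * Complex.cos (s:ℂ) * (1-z) := by
      rw [← Complex.ofReal_sin, ← Complex.ofReal_cos]; exact hkeyid
    have hsC : Complex.sin (s:ℂ) ≠ 0 := by
      rw [← Complex.ofReal_sin]; exact hsinsne
    rw [hc, he, Real.cot_eq_cos_div_sin]
    push_cast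
    field_simp
    rw [hz] at hkeyid'
    linear_combination hkeyid'
  -- diagonal entry is real
  have hmre : (M j j).im = 0 := by
    have h1 := congrFun (congrFun hM.eq j) j
    rw [Matrix.conjTranspose_apply] at h1
    exact Complex.conj_eq_iff_im.mp h1
  -- compute the two absolute values squared
  have habs_jl : ‖((((K - 1) • U + (K + 1) • (1 : Matrix (Fin n) (Fin n) ℂ))⁻¹ *
      ((K + 1) • U + (K - 1) • (1 : Matrix (Fin n) (Fin n) ℂ))) j l)‖ ^ 2
      = ‖e‖ ^ 2 * t ^ 2 := by
    rw [hSjl, norm_mul, mul_pow, ht j l hjl]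
  have habs_jj : ‖((((K - 1) • U + (K + 1) • (1 : Matrix (Fin n) (Fin n) ℂ))⁻¹ *
      ((K + 1) • U + (K - 1) • (1 : Matrix (Fin n) (Fin n) ℂ))) j j)‖ ^ 2
      = ‖e‖ ^ 2 * (r^2 + k^2 * Real.cot s ^ 2) := by
    rw [hSjj, hcot]
    have h1 : e * (K * (Real.cot s : ℂ) * Complex.I) + e * M j j
        = e * (M j j + K * (Real.cot s : ℂ) * Complex.I) := by ring
    rw [h1, norm_mul, mul_pow]
    congr 1
    rw [Complex.sq_norm, Complex.normSq_apply]
    have hcast : M j j + K * (Real.cot s : ℂ) * Complex.I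
        = M j j + ((k * Real.cot s : ℝ) : ℂ) * Complex.I := by
      rw [hK, Complex.ofReal_mul]
    rw [hcast]
    have him : (M j j + ((k * Real.cot s : ℝ) : ℂ) * Complex.I).im = k * Real.cot s := by
      rw [Complex.add_im, hmre, Complex.mul_I_im, Complex.ofReal_re, zero_add]
    have hre : (M j j + ((k * Real.cot s : ℝ) : ℂ) * Complex.I).re = (M j j).re := by
      rw [Complex.add_re, Complex.mul_I_re, Complex.ofReal_im, neg_zero, add_zero]
    rw [him, hre]
    have hr2 : (M j j).re ^ 2 = r ^ 2 := by
      rw [← hr j, Complex.sq_norm, Complex.normSq_apply, hmre]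
      ring
    linear_combination hr2
  rw [habs_jj, habs_jl]
  have heabs : ‖e‖ ^ 2 ≠ 0 := pow_ne_zero 2 (by simpa using hene)
  rw [mul_div_mul_left _ _ heabs]
  have htne : t ≠ 0 := ne_of_gt ht0
  field_simp
  linear_combination (-(k^2 * Real.cot s ^ 2)) * hsum
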